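/- Fix β ∈ (0, π/2). For r ∈ (0, π/2) define l(r) ∈ (0, π/4] by cos(2·l(r)) = √(cos²β·sin²(2r) + cos²(2r)); define t(r) ∈ (0, π/2) as the unique value with tan(2·t(r)) = cos β·tan(2r) for r ≠ π/4 (so t(r) ∈ (0,π/4) for r < π/4 and t(r) ∈ (π/4,π/2) for r > π/4) and t(π/4) = π/4; and define s(r) := arctan(tan l(r) · tan t(r)) ∈ (0, π/2). Then t and s are strictly increasing on (0, π/2); moreover t(r) → 0 and s(r) → 0 as r → 0⁺, while t(r) → π/2 and s(r) → β as r → (π/2)⁻. -/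

import Mathlib

open Real Filter
open Set

noncomputable def Cfun (b x : ℝ) : ℝ := Real.sqrt (1 - Real.sin b ^ 2 * Real.sin x ^ 2)

noncomputable def gfun (b x : ℝ) : ℝ := (Cfun b x - Real.cos x) / (1 + Cfun b x)

lemma aux_inner_pos {b : ℝ} (hcb : 0 < Real.cos b) (x : ℝ) :
    0 < 1 - Real.sin b ^ 2 * Real.sin x ^ 2 := by
  nlinarith [Real.sin_sq_le_one x, Real.sin_sq_add_cos_sq b, sq_nonneg (Real.sin b),
    mul_pos hcb hcb, sq_nonneg (Real.sin b * Real.sin x)]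

lemma Cfun_pos {b : ℝ} (hcb : 0 < Real.cos b) (x : ℝ) : 0 < Cfun b x :=
  Real.sqrt_pos.2 (aux_inner_pos hcb x)

lemma Cfun_le_one (b x : ℝ) : Cfun b x ≤ 1 :=
  Real.sqrt_le_one.2 (by nlinarith [sq_nonneg (Real.sin b * Real.sin x)])

lemma Cfun_sq {b : ℝ} (hcb : 0 < Real.cos b) (x : ℝ) :
    Cfun b x ^ 2 = 1 - Real.sin b ^ 2 * Real.sin x ^ 2 :=
  Real.sq_sqrt (aux_inner_pos hcb x).le

lemma Cfun_sq_cos {b : ℝ} (hcb : 0 < Real.cos b) (x : ℝ) :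
    Cfun b x ^ 2 = Real.cos b ^ 2 * Real.sin x ^ 2 + Real.cos x ^ 2 := by
  rw [Cfun_sq hcb]
  linear_combination (-(Real.sin x ^ 2)) * Real.sin_sq_add_cos_sq b - Real.sin_sq_add_cos_sq x

lemma Cfun_abs_cos_lt {b x : ℝ} (hcb : 0 < Real.cos b) (hsx : Real.sin x ≠ 0) :
    |Real.cos x| < Cfun b x := by
  have h1 : Real.cos x ^ 2 < Cfun b x ^ 2 := by
    rw [Cfun_sq_cos hcb]
    have : 0 < Real.cos b ^ 2 * Real.sin x ^ 2 := by positivity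
    linarith
  have h2 : 0 < Cfun b x := Cfun_pos hcb x
  nlinarith [abs_nonneg (Real.cos x), sq_abs (Real.cos x)]

lemma Cfun_add_cos_pos {b x : ℝ} (hcb : 0 < Real.cos b) (hsx : Real.sin x ≠ 0) :
    0 < Cfun b x + Real.cos x := by
  have := Cfun_abs_cos_lt hcb hsx
  have := abs_lt.1 this
  linarith [this.1]

lemma Cfun_continuous (b : ℝ) : Continuous (Cfun b) := by
  apply Continuous.sqrt
  continuity

lemma gfun_continuous {b : ℝ} (hcb : 0 < Real.cos b) : Continuous (gfun b) := by
  apply ((Cfun_continuous b).sub Real.continuous_cos).div (continuous_const.add (Cfun_continuous b))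
  intro x
  have := Cfun_pos hcb x
  have h' : (0:ℝ) < 1 + Cfun b x := by linarith
  exact h'.ne'

lemma gfun_zero (b : ℝ) : gfun b 0 = 0 := by
  simp [gfun, Cfun]

lemma gfun_pi (b : ℝ) : gfun b π = 1 := by
  simp [gfun, Cfun]

lemma gfun_deriv_pos {b x : ℝ} (hcb : 0 < Real.cos b) (hx : x ∈ Set.Ioo 0 π) :
    0 < deriv (gfun b) x := by
  obtain ⟨hx0, hxpi⟩ := hx
  have hC0 : 0 < Cfun b x := Cfun_pos hcb x
  have hsx : 0 < Real.sin x := Real.sin_pos_of_pos_of_lt_pi hx0 hxpi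
  have hq : HasDerivAt (fun y => 1 - Real.sin b ^ 2 * Real.sin y ^ 2)
      (-(Real.sin b ^ 2 * (2 * Real.sin x * Real.cos x))) x := by
    have h1 : HasDerivAt Real.sin (Real.cos x) x := Real.hasDerivAt_sin x
    have h2 : HasDerivAt (fun y => Real.sin y ^ 2) (2 * Real.sin x * Real.cos x) x := by
      simpa [pow_one, mul_comm, mul_assoc, mul_left_comm] using h1.fun_pow 2
    simpa [mul_comm, mul_assoc, mul_left_comm] using (h2.const_mul (Real.sin b ^ 2)).const_sub 1
  have hC : HasDerivAt (Cfun b)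
      (-(Real.sin b ^ 2 * (2 * Real.sin x * Real.cos x)) / (2 * Cfun b x)) x := by
    exact hq.sqrt (aux_inner_pos hcb x).ne'
  set c' := -(Real.sin b ^ 2 * (2 * Real.sin x * Real.cos x)) / (2 * Cfun b x) with hc'
  have hnum : HasDerivAt (fun y => Cfun b y - Real.cos y) (c' + Real.sin x) x := by
    have := hC.sub (Real.hasDerivAt_cos x)
    rw [sub_neg_eq_add] at this
    exact this
  have hden : HasDerivAt (fun y => 1 + Cfun b y) c' x := by
    simpa using hC.const_add 1
  have hdne : (1 : ℝ) + Cfun b x ≠ 0 := by positivity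
  have hg : HasDerivAt (gfun b)
      (((c' + Real.sin x) * (1 + Cfun b x) - (Cfun b x - Real.cos x) * c') / (1 + Cfun b x) ^ 2)
      x := by
    exact hnum.div hden hdne
  rw [hg.deriv]
  have key : 0 < Cfun b x * (1 + Cfun b x) - Real.sin b ^ 2 * Real.cos x * (1 + Real.cos x) := by
    have hsb1 : Real.sin b ^ 2 < 1 := by nlinarith [Real.sin_sq_add_cos_sq b, mul_pos hcb hcb]
    have h1cx : (0:ℝ) ≤ 1 + Real.cos x := by nlinarith [Real.neg_one_le_cos x]
    rcases le_or_gt (Real.cos x) 0 with h | h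
    · have h2 : Real.sin b ^ 2 * (Real.cos x * (1 + Real.cos x)) ≤ 0 :=
        mul_nonpos_of_nonneg_of_nonpos (sq_nonneg _) (mul_nonpos_of_nonpos_of_nonneg h h1cx)
      nlinarith [mul_pos hC0 (show (0:ℝ) < 1 + Cfun b x by linarith)]
    · have hCc : Real.cos x < Cfun b x := by
        have := Cfun_abs_cos_lt hcb hsx.ne'
        calc Real.cos x ≤ |Real.cos x| := le_abs_self _
          _ < _ := this
      nlinarith [mul_pos h (show (0:ℝ) < 1 + Real.cos x by linarith)]
  have hNum : (c' + Real.sin x) * (1 + Cfun b x) - (Cfun b x - Real.cos x) * c'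
      = Real.sin x * (Cfun b x * (1 + Cfun b x) - Real.sin b ^ 2 * Real.cos x * (1 + Real.cos x))
        / Cfun b x := by
    rw [hc']
    field_simp
    ring
  rw [hNum]
  positivity

lemma gfun_strictMonoOn {b : ℝ} (hcb : 0 < Real.cos b) :
    StrictMonoOn (gfun b) (Set.Icc 0 π) := by
  apply strictMonoOn_of_deriv_pos (convex_Icc 0 π) (gfun_continuous hcb).continuousOn
  intro x hx
  rw [interior_Icc] at hx
  exact gfun_deriv_pos hcb hx

lemma tan_half_formula {θ : ℝ} (h : 0 < Real.cos θ) :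
    Real.tan θ = Real.sin (2 * θ) / (1 + Real.cos (2 * θ)) := by
  rw [Real.tan_eq_sin_div_cos, Real.sin_two_mul, Real.cos_two_mul]
  rw [div_eq_div_iff h.ne' (by nlinarith)]
  ring

noncomputable def Tfun (b r : ℝ) : ℝ :=
  π / 4 - Real.arctan (Real.tan (π / 2 - 2 * r) / Real.cos b) / 2

lemma Tfun_strictMonoOn {b : ℝ} (hcb : 0 < Real.cos b) :
    StrictMonoOn (Tfun b) (Set.Ioo 0 (π / 2)) := by
  have hpi := Real.pi_pos
  intro r1 h1 r2 h2 h12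
  obtain ⟨h10, h12'⟩ := h1
  obtain ⟨h20, h22⟩ := h2
  have m1 : Real.tan (π / 2 - 2 * r2) < Real.tan (π / 2 - 2 * r1) :=
    Real.strictMonoOn_tan ⟨by linarith, by linarith⟩ ⟨by linarith, by linarith⟩ (by linarith)
  have m2 : Real.tan (π / 2 - 2 * r2) / Real.cos b < Real.tan (π / 2 - 2 * r1) / Real.cos b :=
    div_lt_div_of_pos_right m1 hcb
  have m3 := Real.arctan_strictMono m2
  unfold Tfun
  linarith

lemma Tfun_tendsto_zero {b : ℝ} (hcb : 0 < Real.cos b) :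
    Tendsto (Tfun b) (nhdsWithin 0 (Set.Ioi 0)) (nhds 0) := by
  have h1 : Tendsto (fun r : ℝ => π / 2 - 2 * r) (nhdsWithin 0 (Set.Ioi 0))
      (nhdsWithin (π / 2) (Set.Iio (π / 2))) := by
    apply tendsto_nhdsWithin_of_tendsto_nhds_of_eventually_within
    · have hc : Continuous (fun r : ℝ => π / 2 - 2 * r) := by continuity
      have := (hc.tendsto 0).mono_left (nhdsWithin_le_nhds (s := Set.Ioi (0:ℝ)))
      simpa using this
    · filter_upwards [self_mem_nhdsWithin] with r hr
      simp only [Set.mem_Iio]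
      have : (0:ℝ) < r := hr
      linarith
  have h2 := Real.tendsto_tan_pi_div_two.comp h1
  have h3 : Tendsto (fun r : ℝ => Real.tan (π / 2 - 2 * r) / Real.cos b)
      (nhdsWithin 0 (Set.Ioi 0)) atTop := by
    apply Tendsto.atTop_div_const hcb
    exact h2
  have h4 : Tendsto (fun r : ℝ => Real.arctan (Real.tan (π / 2 - 2 * r) / Real.cos b))
      (nhdsWithin 0 (Set.Ioi 0)) (nhds (π / 2)) := by
    have := (Real.tendsto_arctan_atTop.comp h3).mono_right nhdsWithin_le_nhds
    exact this
  have h5 := (h4.div_const 2).const_sub (π / 4)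
  have he : π / 4 - π / 2 / 2 = 0 := by ring
  rw [he] at h5
  exact h5

lemma Tfun_tendsto_pi_div_two {b : ℝ} (hcb : 0 < Real.cos b) :
    Tendsto (Tfun b) (nhdsWithin (π / 2) (Set.Iio (π / 2))) (nhds (π / 2)) := by
  have h1 : Tendsto (fun r : ℝ => π / 2 - 2 * r) (nhdsWithin (π / 2) (Set.Iio (π / 2)))
      (nhdsWithin (-(π / 2)) (Set.Ioi (-(π / 2)))) := by
    apply tendsto_nhdsWithin_of_tendsto_nhds_of_eventually_within
    · have hc : Continuous (fun r : ℝ => π / 2 - 2 * r) := by continuity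
      have := (hc.tendsto (π / 2)).mono_left (nhdsWithin_le_nhds (s := Set.Iio (π / 2 : ℝ)))
      have he : π / 2 - 2 * (π / 2) = -(π / 2) := by ring
      rw [he] at this
      exact this
    · filter_upwards [self_mem_nhdsWithin] with r hr
      simp only [Set.mem_Ioi]
      have : r < π / 2 := hr
      linarith
  have h2 := Real.tendsto_tan_neg_pi_div_two.comp h1
  have h3 : Tendsto (fun r : ℝ => Real.tan (π / 2 - 2 * r) / Real.cos b)
      (nhdsWithin (π / 2) (Set.Iio (π / 2))) atBot := by
    apply Tendsto.atBot_div_const hcb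
    exact h2
  have h4 : Tendsto (fun r : ℝ => Real.arctan (Real.tan (π / 2 - 2 * r) / Real.cos b))
      (nhdsWithin (π / 2) (Set.Iio (π / 2))) (nhds (-(π / 2))) := by
    have := (Real.tendsto_arctan_atBot.comp h3).mono_right nhdsWithin_le_nhds
    exact this
  have h5 := (h4.div_const 2).const_sub (π / 4)
  have he : π / 4 - -(π / 2) / 2 = π / 2 := by ring
  rw [he] at h5
  exact h5


set_option maxHeartbeats 1000000 in
theorem stmt_3 (β : ℝ) (hβ0 : 0 < β) (hβ : β < π / 2)
    (l t s : ℝ → ℝ)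
    (hl_mem : ∀ r ∈ Set.Ioo (0 : ℝ) (π / 2), 0 < l r ∧ l r ≤ π / 4)
    (hl_eq : ∀ r ∈ Set.Ioo (0 : ℝ) (π / 2),
      Real.cos (2 * l r) =
        Real.sqrt (Real.cos β ^ 2 * Real.sin (2 * r) ^ 2 + Real.cos (2 * r) ^ 2))
    (ht_mem : ∀ r ∈ Set.Ioo (0 : ℝ) (π / 2), 0 < t r ∧ t r < π / 2)
    (ht_lt : ∀ r ∈ Set.Ioo (0 : ℝ) (π / 2), r < π / 4 → t r < π / 4)
    (ht_gt : ∀ r ∈ Set.Ioo (0 : ℝ) (π / 2), π / 4 < r → π / 4 < t r)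
    (ht_eq : ∀ r ∈ Set.Ioo (0 : ℝ) (π / 2), r ≠ π / 4 →
      Real.tan (2 * t r) = Real.cos β * Real.tan (2 * r))
    (ht_mid : t (π / 4) = π / 4)
    (hs_def : ∀ r ∈ Set.Ioo (0 : ℝ) (π / 2),
      s r = Real.arctan (Real.tan (l r) * Real.tan (t r)))
    (hs_mem : ∀ r ∈ Set.Ioo (0 : ℝ) (π / 2), 0 < s r ∧ s r < π / 2) :
    StrictMonoOn t (Set.Ioo 0 (π / 2)) ∧
    StrictMonoOn s (Set.Ioo 0 (π / 2)) ∧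
    Tendsto t (nhdsWithin 0 (Set.Ioi 0)) (nhds 0) ∧
    Tendsto s (nhdsWithin 0 (Set.Ioi 0)) (nhds 0) ∧
    Tendsto t (nhdsWithin (π / 2) (Set.Iio (π / 2))) (nhds (π / 2)) ∧
    Tendsto s (nhdsWithin (π / 2) (Set.Iio (π / 2))) (nhds β) := by
  have hpi := Real.pi_pos
  have hcb : 0 < Real.cos β := Real.cos_pos_of_mem_Ioo ⟨by linarith, hβ⟩
  have hsb : 0 < Real.sin β := Real.sin_pos_of_pos_of_lt_pi hβ0 (by linarith)
  have htT : ∀ r ∈ Set.Ioo (0 : ℝ) (π / 2), t r = Tfun β r := by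
    intro r hr
    rcases eq_or_ne r (π / 4) with h | h
    · rw [h, ht_mid]
      unfold Tfun
      have he : π / 2 - 2 * (π / 4) = 0 := by ring
      rw [he, Real.tan_zero, zero_div, Real.arctan_zero]
      ring
    · obtain ⟨ht0, ht2⟩ := ht_mem r hr
      have key : Real.arctan (Real.tan (π / 2 - 2 * r) / Real.cos β) = π / 2 - 2 * t r := by
        have h1 : Real.tan (π / 2 - 2 * t r) = Real.tan (π / 2 - 2 * r) / Real.cos β := by
          rw [Real.tan_pi_div_two_sub, Real.tan_pi_div_two_sub, ht_eq r hr h, mul_inv_rev,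
            ← div_eq_mul_inv]
        rw [← h1, Real.arctan_tan (by linarith) (by linarith)]
      unfold Tfun
      rw [key]
      ring
  have htmono : StrictMonoOn t (Set.Ioo 0 (π / 2)) := by
    intro r1 h1 r2 h2 h12
    rw [htT r1 h1, htT r2 h2]
    exact Tfun_strictMonoOn hcb h1 h2 h12
  have hmemIoo0 : Set.Ioo (0:ℝ) (π/2) ∈ nhdsWithin (0:ℝ) (Set.Ioi 0) :=
    Ioo_mem_nhdsGT_of_mem ⟨le_refl 0, by linarith⟩
  have hmemIoo2 : Set.Ioo (0:ℝ) (π/2) ∈ nhdsWithin (π/2 : ℝ) (Set.Iio (π/2)) :=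
    Ioo_mem_nhdsLT_of_mem ⟨by linarith, le_refl _⟩
  have ht_lim0 : Tendsto t (nhdsWithin 0 (Set.Ioi 0)) (nhds 0) := by
    have heq : Tfun β =ᶠ[nhdsWithin (0:ℝ) (Set.Ioi 0)] t := by
      filter_upwards [hmemIoo0] with r hr
      exact (htT r hr).symm
    exact Filter.Tendsto.congr' heq (Tfun_tendsto_zero hcb)
  have ht_lim2 : Tendsto t (nhdsWithin (π/2) (Set.Iio (π/2))) (nhds (π/2)) := by
    have heq : Tfun β =ᶠ[nhdsWithin (π/2:ℝ) (Set.Iio (π/2))] t := by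
      filter_upwards [hmemIoo2] with r hr
      exact (htT r hr).symm
    exact Filter.Tendsto.congr' heq (Tfun_tendsto_pi_div_two hcb)
  -- formula for s
  have hsS : ∀ r ∈ Set.Ioo (0 : ℝ) (π / 2),
      s r = Real.arctan (Real.tan β * gfun β (2 * r)) := by
    intro r hr
    obtain ⟨hr0, hr2⟩ := hr
    have hrm : r ∈ Set.Ioo (0:ℝ) (π/2) := ⟨hr0, hr2⟩
    have hx0 : 0 < 2 * r := by linarith
    have hxpi : 2 * r < π := by linarith
    have hsx : 0 < Real.sin (2 * r) := Real.sin_pos_of_pos_of_lt_pi hx0 hxpi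
    have hC0 : 0 < Cfun β (2 * r) := Cfun_pos hcb _
    have hC1 : Cfun β (2 * r) ≤ 1 := Cfun_le_one β _
    have hCsq : Cfun β (2 * r) ^ 2
        = Real.cos β ^ 2 * Real.sin (2 * r) ^ 2 + Real.cos (2 * r) ^ 2 := Cfun_sq_cos hcb _
    have hCpc : 0 < Cfun β (2 * r) + Real.cos (2 * r) := Cfun_add_cos_pos hcb hsx.ne'
    obtain ⟨hl0, hl4⟩ := hl_mem r hrm
    obtain ⟨ht0, ht2⟩ := ht_mem r hrm
    have hcosl : Real.cos (2 * l r) = Cfun β (2 * r) := by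
      rw [hl_eq r hrm]
      unfold Cfun
      congr 1
      linear_combination (Real.sin (2 * r) ^ 2) * Real.sin_sq_add_cos_sq β
        + Real.sin_sq_add_cos_sq (2 * r)
    have hsinl : Real.sin (2 * l r) = Real.sin β * Real.sin (2 * r) := by
      have hnn : 0 ≤ Real.sin (2 * l r) :=
        Real.sin_nonneg_of_nonneg_of_le_pi (by linarith) (by linarith)
      have hsq : Real.sin (2 * l r) ^ 2 = (Real.sin β * Real.sin (2 * r)) ^ 2 := by
        have hp := Real.sin_sq_add_cos_sq (2 * l r)
        rw [hcosl] at hp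
        nlinarith [Real.sin_sq_add_cos_sq β, Real.sin_sq_add_cos_sq (2 * r), hCsq]
      have hnn2 : 0 ≤ Real.sin β * Real.sin (2 * r) := le_of_lt (mul_pos hsb hsx)
      calc Real.sin (2 * l r) = Real.sqrt (Real.sin (2 * l r) ^ 2) := (Real.sqrt_sq hnn).symm
        _ = Real.sqrt ((Real.sin β * Real.sin (2 * r)) ^ 2) := by rw [hsq]
        _ = _ := Real.sqrt_sq hnn2
    have hct : Real.cos (2 * t r) = Real.cos (2 * r) / Cfun β (2 * r) ∧
        Real.sin (2 * t r) = Real.cos β * Real.sin (2 * r) / Cfun β (2 * r) := by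
      rcases eq_or_ne r (π / 4) with he | hne
      · subst he
        rw [ht_mid]
        have he2 : 2 * (π / 4) = π / 2 := by ring
        rw [he2, Real.cos_pi_div_two, Real.sin_pi_div_two]
        have hCe : Cfun β (π / 2) = Real.cos β := by
          unfold Cfun
          rw [Real.sin_pi_div_two]
          have h9 : 1 - Real.sin β ^ 2 * 1 ^ 2 = Real.cos β ^ 2 := by
            linear_combination -Real.sin_sq_add_cos_sq β
          rw [h9, Real.sqrt_sq hcb.le]
        rw [hCe]
        exact ⟨by rw [zero_div], by rw [mul_one, div_self hcb.ne']⟩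
      · have hsgn : (0 < Real.cos (2 * r) ∧ 0 < Real.cos (2 * t r)) ∨
            (Real.cos (2 * r) < 0 ∧ Real.cos (2 * t r) < 0) := by
          rcases lt_or_gt_of_ne hne with h4 | h4
          · left
            have hlt := ht_lt r hrm h4
            exact ⟨Real.cos_pos_of_mem_Ioo ⟨by linarith, by linarith⟩,
              Real.cos_pos_of_mem_Ioo ⟨by linarith, by linarith⟩⟩
          · right
            have hgt := ht_gt r hrm h4
            exact ⟨Real.cos_neg_of_pi_div_two_lt_of_lt (by linarith) (by linarith),
              Real.cos_neg_of_pi_div_two_lt_of_lt (by linarith) (by linarith)⟩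
        have hcxne : Real.cos (2 * r) ≠ 0 := by
          rcases hsgn with ⟨h, _⟩ | ⟨h, _⟩
          · exact h.ne'
          · exact h.ne
        have hctne : Real.cos (2 * t r) ≠ 0 := by
          rcases hsgn with ⟨_, h⟩ | ⟨_, h⟩
          · exact h.ne'
          · exact h.ne
        have hcross : Real.sin (2 * t r) * Real.cos (2 * r)
            = Real.cos β * Real.sin (2 * r) * Real.cos (2 * t r) := by
          have h1 := ht_eq r hrm hne
          rw [Real.tan_eq_sin_div_cos, Real.tan_eq_sin_div_cos] at h1
          field_simp at h1
          linear_combination h1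
        have hu2 : Real.cos (2 * t r) ^ 2 * Cfun β (2 * r) ^ 2 = Real.cos (2 * r) ^ 2 := by
          have hcross2 : (Real.sin (2 * t r) * Real.cos (2 * r)) ^ 2
              = (Real.cos β * Real.sin (2 * r) * Real.cos (2 * t r)) ^ 2 := by rw [hcross]
          have hp1 := Real.sin_sq_add_cos_sq (2 * t r)
          linear_combination (Real.cos (2 * t r) ^ 2) * hCsq - hcross2
            + (Real.cos (2 * r) ^ 2) * hp1
        have hfac : (Real.cos (2 * t r) * Cfun β (2 * r) - Real.cos (2 * r)) *
            (Real.cos (2 * t r) * Cfun β (2 * r) + Real.cos (2 * r)) = 0 := by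
          linear_combination hu2
        have hueq : Real.cos (2 * t r) * Cfun β (2 * r) = Real.cos (2 * r) := by
          rcases mul_eq_zero.1 hfac with h | h
          · linarith
          · exfalso
            rcases hsgn with ⟨h1, h2⟩ | ⟨h1, h2⟩
            · have := mul_pos h2 hC0
              linarith
            · have := mul_neg_of_neg_of_pos h2 hC0
              linarith
        have hu : Real.cos (2 * t r) = Real.cos (2 * r) / Cfun β (2 * r) := by
          rw [eq_div_iff hC0.ne']
          exact hueq
        refine ⟨hu, ?_⟩
        have h2 : Real.sin (2 * t r) * Real.cos (2 * r)
            = (Real.cos β * Real.sin (2 * r) / Cfun β (2 * r)) * Real.cos (2 * r) := by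
          rw [hcross, hu]
          ring
        exact mul_right_cancel₀ hcxne h2
    have hcoslpos : 0 < Real.cos (l r) := Real.cos_pos_of_mem_Ioo ⟨by linarith, by linarith⟩
    have hcostpos : 0 < Real.cos (t r) := Real.cos_pos_of_mem_Ioo ⟨by linarith, ht2⟩
    have htanl : Real.tan (l r) = Real.sin β * Real.sin (2 * r) / (1 + Cfun β (2 * r)) := by
      rw [tan_half_formula hcoslpos, hsinl, hcosl]
    have htant : Real.tan (t r)
        = Real.cos β * Real.sin (2 * r) / (Cfun β (2 * r) + Real.cos (2 * r)) := by
      rw [tan_half_formula hcostpos, hct.2, hct.1]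
      rw [div_eq_div_iff _ hCpc.ne']
      · field_simp
      · have h1 : 1 + Real.cos (2 * r) / Cfun β (2 * r)
            = (Cfun β (2 * r) + Real.cos (2 * r)) / Cfun β (2 * r) := by
          field_simp
        rw [h1]
        positivity
    have hprod : Real.tan (l r) * Real.tan (t r) = Real.tan β * gfun β (2 * r) := by
      rw [htanl, htant, Real.tan_eq_sin_div_cos]
      unfold gfun
      rw [div_mul_div_comm, div_mul_div_comm,
        div_eq_div_iff (by positivity) (by positivity)]
      linear_combination (-(Real.sin β) * (1 + Cfun β (2 * r))) * hCsq
    rw [hs_def r hrm, hprod]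
  have htanβ : 0 < Real.tan β := Real.tan_pos_of_pos_of_lt_pi_div_two hβ0 hβ
  have hsmono : StrictMonoOn s (Set.Ioo 0 (π / 2)) := by
    intro r1 h1 r2 h2 h12
    rw [hsS r1 h1, hsS r2 h2]
    apply Real.arctan_strictMono
    apply mul_lt_mul_of_pos_left _ htanβ
    exact gfun_strictMonoOn hcb ⟨by linarith [h1.1], by linarith [h1.2]⟩
      ⟨by linarith [h2.1], by linarith [h2.2]⟩ (by linarith)
  have hScont : Continuous (fun r : ℝ => Real.arctan (Real.tan β * gfun β (2 * r))) := by
    apply Real.continuous_arctan.comp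
    exact continuous_const.mul ((gfun_continuous hcb).comp (continuous_const.mul continuous_id))
  have hs_lim0 : Tendsto s (nhdsWithin 0 (Set.Ioi 0)) (nhds 0) := by
    have heq : (fun r : ℝ => Real.arctan (Real.tan β * gfun β (2 * r)))
        =ᶠ[nhdsWithin (0:ℝ) (Set.Ioi 0)] s := by
      filter_upwards [hmemIoo0] with r hr
      exact (hsS r hr).symm
    apply Filter.Tendsto.congr' heq
    have h0 := (hScont.tendsto 0).mono_left (nhdsWithin_le_nhds (s := Set.Ioi (0:ℝ)))
    simpa [gfun_zero] using h0
  have hs_lim2 : Tendsto s (nhdsWithin (π/2) (Set.Iio (π/2))) (nhds β) := by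
    have heq : (fun r : ℝ => Real.arctan (Real.tan β * gfun β (2 * r)))
        =ᶠ[nhdsWithin (π/2:ℝ) (Set.Iio (π/2))] s := by
      filter_upwards [hmemIoo2] with r hr
      exact (hsS r hr).symm
    apply Filter.Tendsto.congr' heq
    have h0 := (hScont.tendsto (π/2)).mono_left (nhdsWithin_le_nhds (s := Set.Iio (π/2:ℝ)))
    have he : (2 : ℝ) * (π/2) = π := by ring
    rw [he] at h0
    rw [gfun_pi, mul_one, Real.arctan_tan (by linarith) hβ] at h0
    exact h0
  exact ⟨htmono, hsmono, ht_lim0, hs_lim0, ht_lim2, hs_lim2⟩
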